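/- Let G be a cyclic group of prime order p, let k < p be a positive integer, let a_1,...,a_k be k distinct elements of G, and let b_1,...,b_k be (not necessarily distinct) elements of G. Then there is a permutation π ∈ S_k such that a_1·b_{π(1)}, ..., a_k·b_{π(k)} are pairwise distinct. -/

import Mathlib

open Finset Polynomial

section Field
variable {F : Type*} [Field F] {ι : Type*} [DecidableEq ι] {k : ℕ}

lemma basis_eq_weight_mul_nodal (s : Finset ι) (v : ι → F) (i : ι) :
    Lagrange.basis s v i
      = C (Lagrange.nodalWeight s v i) * Lagrange.nodal (s.erase i) v := by
  rw [Lagrange.basis, Lagrange.nodalWeight, Lagrange.nodal, map_prod, ← prod_mul_distrib]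
  refine prod_congr rfl fun j _ => ?_
  rw [Lagrange.basisDivisor]

lemma coeff_basis (s : Finset ι) (v : ι → F) {i : ι} (hi : i ∈ s) :
    (Lagrange.basis s v i).coeff (#s - 1) = Lagrange.nodalWeight s v i := by
  rw [basis_eq_weight_mul_nodal, coeff_C_mul]
  have h1 : (Lagrange.nodal (s.erase i) v).natDegree = #s - 1 := by
    rw [Lagrange.natDegree_nodal, card_erase_of_mem hi]
  rw [← h1, Monic.coeff_natDegree (Lagrange.nodal_monic), mul_one]

/-- moment lemma -/
lemma moment_lemma (hk : 0 < k) (α : Fin k → F) (hα : Function.Injective α) (m : ℕ)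
    (hm : m ≤ k - 1) :
    (∑ j, Lagrange.nodalWeight Finset.univ α j * α j ^ m) = if m = k - 1 then 1 else 0 := by
  classical
  have hinj : Set.InjOn α (Finset.univ : Finset (Fin k)) := fun x _ y _ h => hα h
  have hcard : #(Finset.univ : Finset (Fin k)) = k := by simp
  have hdeg : (X ^ m : F[X]).degree < (#(Finset.univ : Finset (Fin k)) : ℕ∞) := by
    rw [hcard, degree_X_pow]
    exact (WithBot.coe_lt_coe.mpr (lt_of_le_of_lt hm (Nat.sub_lt hk one_pos)) :)
  have h := Lagrange.eq_interpolate (f := (X ^ m : F[X])) hinj hdeg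
  have h2 := congrArg (fun p => Polynomial.coeff p (k - 1)) h
  simp only [Lagrange.interpolate_apply, finset_sum_coeff, coeff_C_mul, eval_pow, eval_X,
    coeff_X_pow] at h2
  have hb : ∀ j : Fin k, (Lagrange.basis Finset.univ α j).coeff (k - 1)
      = Lagrange.nodalWeight Finset.univ α j := by
    intro j
    have := coeff_basis Finset.univ α (mem_univ j)
    rwa [hcard] at this
  simp only [hb] at h2
  rw [show (if m = k - 1 then (1:F) else 0) = (if k - 1 = m then (1:F) else 0) by
    simp [eq_comm], h2]
  exact Finset.sum_congr rfl fun j _ => mul_comm _ _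
end Field

section Field2
variable {F : Type*} [Field F] {k : ℕ}

lemma det_vdm_expand (v : Fin k → F) :
    (Matrix.vandermonde v).det
      = ∑ σ : Equiv.Perm (Fin k), ((Equiv.Perm.sign σ : ℤ) : F) * ∏ i, v i ^ (σ i : ℕ) := by
  rw [← Matrix.det_transpose, Matrix.det_apply']
  simp [Matrix.vandermonde_apply, Matrix.transpose_apply]

lemma T_lemma (hk : 0 < k) (α : Fin k → F) (hα : Function.Injective α)
    (s t : ℕ) (hst : s + t ≤ k - 1) (c : F) :
    (∑ j, Lagrange.nodalWeight Finset.univ α j * (α j ^ s * (α j + c) ^ t))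
      = if s + t = k - 1 then 1 else 0 := by
  have expand : ∀ j : Fin k,
      Lagrange.nodalWeight Finset.univ α j * (α j ^ s * (α j + c) ^ t)
        = ∑ r ∈ range (t + 1),
            (c ^ (t - r) * (t.choose r : F))
              * (Lagrange.nodalWeight Finset.univ α j * α j ^ (s + r)) := by
    intro j
    rw [add_pow, mul_sum, mul_sum]
    refine Finset.sum_congr rfl fun r _ => ?_
    rw [pow_add]; ring
  calc (∑ j, Lagrange.nodalWeight Finset.univ α j * (α j ^ s * (α j + c) ^ t))
      = ∑ j, ∑ r ∈ range (t + 1),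
          (c ^ (t - r) * (t.choose r : F))
            * (Lagrange.nodalWeight Finset.univ α j * α j ^ (s + r)) := by
        exact Finset.sum_congr rfl fun j _ => expand j
    _ = ∑ r ∈ range (t + 1), (c ^ (t - r) * (t.choose r : F))
          * ∑ j, Lagrange.nodalWeight Finset.univ α j * α j ^ (s + r) := by
        rw [Finset.sum_comm]
        exact Finset.sum_congr rfl fun r _ => (Finset.mul_sum _ _ _).symm
    _ = ∑ r ∈ range (t + 1), (c ^ (t - r) * (t.choose r : F))
          * (if s + r = k - 1 then 1 else 0) := by
        refine Finset.sum_congr rfl fun r hr => ?_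
        have hr' : r < t + 1 := Finset.mem_range.mp hr
        rw [moment_lemma hk α hα (s + r) (by omega)]
    _ = if s + t = k - 1 then 1 else 0 := by
        by_cases h : s + t = k - 1
        · rw [if_pos h, Finset.sum_eq_single_of_mem t (Finset.self_mem_range_succ t)]
          · simp [h]
          · intro r hr hrt
            have hr' : r < t + 1 := Finset.mem_range.mp hr
            have hne : s + r ≠ k - 1 := by omega
            simp [hne]
        · rw [if_neg h]
          refine Finset.sum_eq_zero fun r hr => ?_
          have hr' : r < t + 1 := Finset.mem_range.mp hr
          have hne : s + r ≠ k - 1 := by omega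
          simp [hne]
end Field2

section Key
variable {F : Type*} [Field F] {k : ℕ}

lemma sum_prod_swap (g : Fin k → Fin k → F) :
    ∑ y : Fin k → Fin k, ∏ i, g i (y i) = ∏ i, ∑ j, g i j := by
  rw [Finset.prod_univ_sum, Fintype.piFinset_univ]

lemma inj_of_vdm_det_ne_zero {v : Fin k → F} (h : (Matrix.vandermonde v).det ≠ 0) :
    Function.Injective v := by
  intro i j hij
  by_contra hne
  apply h
  rw [Matrix.det_vandermonde]
  rcases lt_or_gt_of_ne hne with h' | h'
  · exact Finset.prod_eq_zero (mem_univ i)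
      (Finset.prod_eq_zero (Finset.mem_Ioi.mpr h') (by rw [hij, sub_self]))
  · exact Finset.prod_eq_zero (mem_univ j)
      (Finset.prod_eq_zero (Finset.mem_Ioi.mpr h') (by rw [hij, sub_self]))

set_option maxHeartbeats 1000000 in
theorem key_field (hk : 0 < k) (hfac : (k.factorial : F) ≠ 0) (α c : Fin k → F)
    (hα : Function.Injective α) :
    ∃ σ : Equiv.Perm (Fin k), Function.Injective fun i => α (σ i) + c i := by
  set w : Fin k → F := Lagrange.nodalWeight Finset.univ α with hw
  set E : Equiv.Perm (Fin k) → F := fun σ => ((Equiv.Perm.sign σ : ℤ) : F) with hE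
  set S : F := ∑ y : Fin k → Fin k, (∏ i, w (y i))
      * (Matrix.vandermonde fun i => α (y i)).det
      * (Matrix.vandermonde fun i => α (y i) + c i).det with hS
  -- Step A : expand S
  have stepA : S = ∑ σ : Equiv.Perm (Fin k), ∑ τ : Equiv.Perm (Fin k),
      (E σ * E τ) * ∏ i, ∑ j, w j * (α j ^ (σ i : ℕ) * (α j + c i) ^ (τ i : ℕ)) := by
    have h1 : S = ∑ y : Fin k → Fin k, ∑ τ : Equiv.Perm (Fin k), ∑ σ : Equiv.Perm (Fin k),
        (E σ * E τ) * ∏ i, w (y i) * (α (y i) ^ (σ i : ℕ) * (α (y i) + c i) ^ (τ i : ℕ)) := by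
      rw [hS]
      refine Finset.sum_congr rfl fun y _ => ?_
      rw [det_vdm_expand, det_vdm_expand, Finset.mul_sum]
      refine Finset.sum_congr rfl fun τ _ => ?_
      rw [Finset.mul_sum, Finset.sum_mul]
      refine Finset.sum_congr rfl fun σ _ => ?_
      rw [Finset.prod_mul_distrib, Finset.prod_mul_distrib]
      rw [hE]
      ring
    have h2 : S = ∑ τ : Equiv.Perm (Fin k), ∑ σ : Equiv.Perm (Fin k),
        ∑ y : Fin k → Fin k,
        (E σ * E τ) * ∏ i, w (y i) * (α (y i) ^ (σ i : ℕ) * (α (y i) + c i) ^ (τ i : ℕ)) := by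
      rw [h1, Finset.sum_comm]
      exact Finset.sum_congr rfl fun τ _ => Finset.sum_comm
    rw [h2, Finset.sum_comm]
    refine Finset.sum_congr rfl fun σ _ => ?_
    refine Finset.sum_congr rfl fun τ _ => ?_
    rw [← Finset.mul_sum]
    congr 1
    exact sum_prod_swap fun i j => w j * (α j ^ (σ i : ℕ) * (α j + c i) ^ (τ i : ℕ))
  -- Step B : evaluate the inner product
  have sum_fin : (∑ i : Fin k, (i : ℕ)) * 2 = k * (k - 1) := by
    have h : ∑ i : Fin k, (i : ℕ) = ∑ i ∈ range k, i :=
      Fin.sum_univ_eq_sum_range (fun i => i) k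
    rw [h]
    exact Finset.sum_range_id_mul_two k
  have stepB : ∀ σ τ : Equiv.Perm (Fin k),
      (∏ i, ∑ j, w j * (α j ^ (σ i : ℕ) * (α j + c i) ^ (τ i : ℕ)))
        = if (∀ i, (σ i : ℕ) + (τ i : ℕ) = k - 1) then 1 else 0 := by
    intro σ τ
    by_cases hall : ∀ i, (σ i : ℕ) + (τ i : ℕ) = k - 1
    · rw [if_pos hall]
      refine Finset.prod_eq_one fun i _ => ?_
      rw [hw, T_lemma hk α hα _ _ (le_of_eq (hall i)) (c i), if_pos (hall i)]
    · rw [if_neg hall]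
      have hex : ∃ i, (σ i : ℕ) + (τ i : ℕ) < k - 1 := by
        by_contra hno
        push_neg at hno
        obtain ⟨i₀, hi₀⟩ := not_forall.mp hall
        have hlt : ∑ i : Fin k, (k - 1) < ∑ i : Fin k, ((σ i : ℕ) + (τ i : ℕ)) :=
          Finset.sum_lt_sum (fun i _ => hno i)
            ⟨i₀, mem_univ i₀, lt_of_le_of_ne (hno i₀) (Ne.symm hi₀)⟩
        have heq : ∑ i : Fin k, ((σ i : ℕ) + (τ i : ℕ)) = k * (k - 1) := by
          rw [Finset.sum_add_distrib, Equiv.sum_comp σ (fun i : Fin k => (i : ℕ)),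
            Equiv.sum_comp τ (fun i : Fin k => (i : ℕ)), ← Nat.two_mul, mul_comm,
            sum_fin]
        rw [heq, Finset.sum_const, card_univ, Fintype.card_fin, smul_eq_mul] at hlt
        omega
      obtain ⟨i₁, hi₁⟩ := hex
      refine Finset.prod_eq_zero (mem_univ i₁) ?_
      rw [hw, T_lemma hk α hα _ _ (le_of_lt hi₁) (c i₁), if_neg (Nat.ne_of_lt hi₁)]
  -- Step C : compute S
  have hcond : ∀ σ τ : Equiv.Perm (Fin k),
      (∀ i, (σ i : ℕ) + (τ i : ℕ) = k - 1) ↔ τ = σ.trans (Fin.revPerm) := by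
    intro σ τ
    constructor
    · intro h
      ext i
      have h1 := h i
      have h2 : (σ i : ℕ) ≤ k - 1 := by have := (σ i).is_lt; omega
      simp only [Equiv.trans_apply, Fin.revPerm_apply, Fin.val_rev]
      omega
    · intro h i
      rw [h]
      simp only [Equiv.trans_apply, Fin.revPerm_apply, Fin.val_rev]
      have h2 : (σ i : ℕ) < k := (σ i).is_lt
      omega
  have stepC : S = (Fintype.card (Equiv.Perm (Fin k)) : F) * E (Fin.revPerm (n := k)) := by
    rw [stepA]
    have hterm : ∀ σ τ : Equiv.Perm (Fin k),
        (E σ * E τ) * ∏ i, ∑ j, w j * (α j ^ (σ i : ℕ) * (α j + c i) ^ (τ i : ℕ))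
          = if τ = σ.trans (Fin.revPerm) then E σ * E τ else 0 := by
      intro σ τ
      rw [stepB σ τ, if_congr (hcond σ τ) rfl rfl, mul_ite, mul_one, mul_zero]
    have hsign : ∀ σ : Equiv.Perm (Fin k), E σ * E (σ.trans Fin.revPerm)
        = E (Fin.revPerm (n := k)) := by
      intro σ
      have h1 : σ.trans (Fin.revPerm) = (Fin.revPerm (n := k)) * σ := rfl
      rw [hE]
      simp only [h1, Equiv.Perm.sign_mul, Units.val_mul, Int.cast_mul]
      rcases Int.units_eq_one_or (Equiv.Perm.sign σ) with h | h <;> simp [h]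
    calc ∑ σ : Equiv.Perm (Fin k), ∑ τ : Equiv.Perm (Fin k),
          (E σ * E τ) * ∏ i, ∑ j, w j * (α j ^ (σ i : ℕ) * (α j + c i) ^ (τ i : ℕ))
        = ∑ σ : Equiv.Perm (Fin k), ∑ τ : Equiv.Perm (Fin k),
          (if τ = σ.trans (Fin.revPerm) then E σ * E τ else 0) :=
          Finset.sum_congr rfl fun σ _ => Finset.sum_congr rfl fun τ _ => hterm σ τ
      _ = ∑ σ : Equiv.Perm (Fin k), E σ * E (σ.trans Fin.revPerm) :=
          Finset.sum_congr rfl fun σ _ =>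
            (Finset.sum_ite_eq' Finset.univ (σ.trans (Fin.revPerm))
              (fun τ => E σ * E τ)).trans (if_pos (mem_univ _))
      _ = ∑ _σ : Equiv.Perm (Fin k), E (Fin.revPerm (n := k)) :=
          Finset.sum_congr rfl fun σ _ => hsign σ
      _ = (Fintype.card (Equiv.Perm (Fin k)) : F) * E (Fin.revPerm (n := k)) := by
          rw [Finset.sum_const, card_univ, nsmul_eq_mul]
  -- S ≠ 0
  have hSne : S ≠ 0 := by
    rw [stepC, Fintype.card_perm, Fintype.card_fin]
    have hpm : E (Fin.revPerm (n := k)) = 1 ∨ E (Fin.revPerm (n := k)) = -1 := by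
      rw [hE]
      rcases Int.units_eq_one_or (Equiv.Perm.sign (Fin.revPerm (n := k))) with h | h <;>
        simp [h]
    rcases hpm with h | h <;> rw [h] <;> simp [hfac]
  -- extract a witness
  have hsum : (∑ y : Fin k → Fin k, (∏ i, w (y i))
      * (Matrix.vandermonde fun i => α (y i)).det
      * (Matrix.vandermonde fun i => α (y i) + c i).det) ≠ 0 := hS ▸ hSne
  obtain ⟨y, -, hy⟩ := Finset.exists_ne_zero_of_sum_ne_zero hsum
  have hdet1 : (Matrix.vandermonde fun i => α (y i)).det ≠ 0 := by
    intro h0; apply hy; rw [h0]; ring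
  have hdet2 : (Matrix.vandermonde fun i => α (y i) + c i).det ≠ 0 := by
    intro h0; apply hy; rw [h0]; ring
  have hinj2 : Function.Injective fun i => α (y i) + c i := inj_of_vdm_det_ne_zero hdet2
  have hyinj : Function.Injective y := fun i j h =>
    (inj_of_vdm_det_ne_zero hdet1) (congrArg α h)
  exact ⟨Equiv.ofBijective y ((Finite.injective_iff_bijective).mp hyinj), hinj2⟩

end Key

/-- Alon's theorem: in a cyclic group of prime order `p`, given `k < p` distinct elements
`a i` and arbitrary elements `b i`, some permutation makes the products distinct. -/
theorem alon_snevily_prime {G : Type*} [CommGroup G] [Fintype G] [IsCyclic G]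
    {p : ℕ} (hp : p.Prime) (hG : Fintype.card G = p) {k : ℕ} (hk : 0 < k) (hkp : k < p)
    (a b : Fin k → G) (ha : Function.Injective a) :
    ∃ π : Equiv.Perm (Fin k), Function.Injective (fun i => a i * b (π i)) := by
  have hn : p = Nat.card G := by rw [Nat.card_eq_fintype_card, hG]
  subst hn
  haveI : Fact (Nat.card G).Prime := ⟨hp⟩
  have e : Multiplicative (ZMod (Nat.card G)) ≃* G :=
    zmodCyclicMulEquiv (inferInstance : IsCyclic G)
  set α : Fin k → ZMod (Nat.card G) := fun i => Multiplicative.toAdd (e.symm (a i)) with hα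
  set c : Fin k → ZMod (Nat.card G) := fun i => Multiplicative.toAdd (e.symm (b i)) with hc
  have hαinj : Function.Injective α := by
    intro i j h
    apply ha
    apply e.symm.injective
    exact Multiplicative.toAdd.injective h
  have hfac : ((k.factorial : ℕ) : ZMod (Nat.card G)) ≠ 0 := by
    rw [Ne, ZMod.natCast_eq_zero_iff]
    intro hdvd
    have := hp.dvd_factorial.mp hdvd
    omega
  obtain ⟨σ, hσ⟩ := key_field hk hfac α c hαinj
  refine ⟨σ⁻¹, ?_⟩
  intro i j hij
  have h1 : α i + c (σ⁻¹ i) = α j + c (σ⁻¹ j) := by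
    have h2 := congrArg (fun g => Multiplicative.toAdd (e.symm g)) hij
    simpa [hα, hc, map_mul] using h2
  have h3 : (fun i => α (σ i) + c i) (σ⁻¹ i) = (fun i => α (σ i) + c i) (σ⁻¹ j) := by
    simp only [Equiv.Perm.inv_def, Equiv.apply_symm_apply]
    exact h1
  exact (σ⁻¹ : Equiv.Perm (Fin k)).injective (hσ h3)
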